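/- Let π < θ ≤ φ < 2π, and let (λ_j)_{j∈ℕ} be a sequence of distinct nonzero complex numbers, each with argument in [θ, φ], whose counting function n(r) = #{j : |λ_j| ≤ r} is finite for every r and satisfies n(r) ≥ c·r for some c > 0 and all sufficiently large r. Then the series ∑_j (−Im λ_j)/|λ_j|² diverges (note that −Im λ_j > 0 for every j, since arg λ_j ∈ (π, 2π)). -/

import Mathlib

open Filter

/-- Divergence of the angular part of the Breit–Wigner series: a sequence of distinct
nonzero points confined to a closed sector strictly inside the open lower half-plane,
whose counting function grows at least linearly, has divergent series `∑ (−Im λ_j)/|λ_j|²`. -/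
theorem breit_wigner_divergence_in_sector
    (θ φ : ℝ) (hθ : Real.pi < θ) (hθφ : θ ≤ φ) (hφ : φ < 2 * Real.pi)
    (lam : ℕ → ℂ) (hinj : Function.Injective lam) (hne : ∀ j, lam j ≠ 0)
    (harg : ∀ j, ∃ r α : ℝ, 0 < r ∧ θ ≤ α ∧ α ≤ φ ∧
      lam j = (r : ℂ) * Complex.exp ((α : ℂ) * Complex.I))
    (hfin : ∀ r : ℝ, {j : ℕ | ‖lam j‖ ≤ r}.Finite)
    (c : ℝ) (hc : 0 < c)
    (hlin : ∀ᶠ r : ℝ in Filter.atTop, c * r ≤ (Nat.card {j : ℕ | ‖lam j‖ ≤ r} : ℝ)) :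
    ¬ Summable (fun j : ℕ => (-(lam j).im) / ‖lam j‖ ^ 2) := by
  intro hsum
  have hnorm_pos : ∀ j, 0 < ‖lam j‖ := fun j => norm_pos_iff.mpr (hne j)
  -- maximum of sin on [θ, φ] is negative
  obtain ⟨α0, hα0mem, hα0max⟩ :=
    (isCompact_Icc (a := θ) (b := φ)).exists_isMaxOn (Set.nonempty_Icc.mpr hθφ)
      Real.continuous_sin.continuousOn
  have hα0 : Real.sin α0 < 0 := by
    have h1 : Real.pi < α0 := lt_of_lt_of_le hθ hα0mem.1
    have h2 : α0 < 2 * Real.pi := lt_of_le_of_lt hα0mem.2 hφ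
    have h3 : 0 < Real.sin (α0 - Real.pi) :=
      Real.sin_pos_of_pos_of_lt_pi (by linarith) (by linarith)
    rw [Real.sin_sub_pi] at h3
    linarith
  set ε := -Real.sin α0 with hεdef
  have hε0 : 0 < ε := by simp only [hεdef]; linarith
  -- key pointwise bound
  have hkey : ∀ j, ε / ‖lam j‖ ≤ (-(lam j).im) / ‖lam j‖ ^ 2 := by
    intro j
    obtain ⟨r, α, hr, hθα, hαφ, hj⟩ := harg j
    have hnorm : ‖lam j‖ = r := by
      rw [hj]
      rw [norm_mul, Complex.norm_exp_ofReal_mul_I, Complex.norm_real,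
        Real.norm_of_nonneg hr.le, mul_one]
    have him : (lam j).im = r * Real.sin α := by
      rw [hj]
      simp [Complex.mul_im, Complex.exp_ofReal_mul_I_im, Complex.exp_ofReal_mul_I_re]
    have hsin : ε ≤ -Real.sin α := by
      have h : Real.sin α ≤ Real.sin α0 := hα0max (Set.mem_Icc.mpr ⟨hθα, hαφ⟩)
      simp only [hεdef]; linarith
    rw [hnorm, him]
    have heq : (-(r * Real.sin α)) / r ^ 2 = (-Real.sin α) / r := by
      rw [pow_two]; field_simp
    rw [heq]
    gcongr
  -- hence ∑ 1/‖lam j‖ is summable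
  have hsum1 : Summable fun j => ε / ‖lam j‖ :=
    hsum.of_nonneg_of_le (fun j => div_nonneg hε0.le (norm_nonneg _)) hkey
  have hsumf : Summable fun j : ℕ => 1 / ‖lam j‖ := by
    have h := hsum1.mul_left ε⁻¹
    have heq : (fun j : ℕ => ε⁻¹ * (ε / ‖lam j‖)) = fun j : ℕ => 1 / ‖lam j‖ := by
      funext j; field_simp
    rwa [heq] at h
  have hfnn : ∀ j : ℕ, 0 ≤ 1 / ‖lam j‖ := fun j => by positivity
  set S := ∑' j : ℕ, 1 / ‖lam j‖ with hSdef
  -- upper bound on the counting function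
  have hA : ∀ R : ℝ, 0 < R → (((hfin R).toFinset.card : ℝ)) ≤ S * R := by
    intro R hR
    have h1 : ∀ j ∈ (hfin R).toFinset, 1 / R ≤ 1 / ‖lam j‖ := by
      intro j hj
      rw [Set.Finite.mem_toFinset] at hj
      exact one_div_le_one_div_of_le (hnorm_pos j) hj
    have h2 : ((hfin R).toFinset.card : ℝ) * (1 / R) ≤
        ∑ j ∈ (hfin R).toFinset, 1 / ‖lam j‖ := by
      calc ((hfin R).toFinset.card : ℝ) * (1 / R)
          = ∑ _j ∈ (hfin R).toFinset, 1 / R := by rw [Finset.sum_const, nsmul_eq_mul]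
        _ ≤ _ := Finset.sum_le_sum h1
    have h3 : ∑ j ∈ (hfin R).toFinset, 1 / ‖lam j‖ ≤ S :=
      Summable.sum_le_tsum _ (fun j _ => hfnn j) hsumf
    have h4 : ((hfin R).toFinset.card : ℝ) / R ≤ S := by
      rw [div_eq_mul_one_div]; linarith
    rw [div_le_iff₀ hR] at h4
    linarith
  -- lower bound from hlin, stated via toFinset.card
  obtain ⟨R1, hR1⟩ := eventually_atTop.mp hlin
  have hlin' : ∀ R : ℝ, R1 ≤ R → c * R ≤ ((hfin R).toFinset.card : ℝ) := by
    intro R hR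
    have := hR1 R hR
    rwa [Nat.card_coe_set_eq, Set.ncard_eq_toFinset_card _ (hfin R)] at this
  set R0 := max R1 1 with hR0def
  have hR0pos : (0:ℝ) < R0 := lt_of_lt_of_le one_pos (le_max_right _ _)
  have hR0R1 : R1 ≤ R0 := le_max_left _ _
  -- S ≥ c > 0
  have hcS : c ≤ S := by
    have h1 := hlin' R0 hR0R1
    have h2 := hA R0 hR0pos
    nlinarith
  have hS0 : 0 < S := lt_of_lt_of_le hc hcS
  set q := 2 * S / c with hqdef
  have hq1 : (2:ℝ) ≤ q := by
    rw [hqdef, le_div_iff₀ hc]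
    nlinarith
  have hqpos : (0:ℝ) < q := by linarith
  -- radii
  set R : ℕ → ℝ := fun m => R0 * q ^ m with hRdef
  have hRpos : ∀ m, 0 < R m := fun m => mul_pos hR0pos (pow_pos hqpos m)
  have hRge : ∀ m, R1 ≤ R m := by
    intro m
    have h1 : (1:ℝ) ≤ q ^ m := one_le_pow₀ (by linarith : (1:ℝ) ≤ q)
    calc R1 ≤ R0 := hR0R1
      _ = R0 * 1 := (mul_one _).symm
      _ ≤ R0 * q ^ m := by nlinarith
  have hRmono : ∀ m, R m ≤ R (m + 1) := by
    intro m
    simp only [hRdef, pow_succ]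
    have h := mul_pos hR0pos (pow_pos hqpos m)
    nlinarith [hq1]
  have hTsub : ∀ m, (hfin (R m)).toFinset ⊆ (hfin (R (m+1))).toFinset := by
    intro m j hj
    rw [Set.Finite.mem_toFinset] at *
    exact le_trans hj (hRmono m)
  -- main induction: partial sums grow linearly
  have hmain : ∀ m : ℕ, (m : ℝ) * (c / 2) ≤ ∑ j ∈ (hfin (R m)).toFinset, 1 / ‖lam j‖ := by
    intro m
    induction m with
    | zero =>
      simp only [Nat.cast_zero, zero_mul]
      exact Finset.sum_nonneg (fun j _ => hfnn j)
    | succ m ih =>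
      have hsplit : ∑ j ∈ (hfin (R (m+1))).toFinset, 1 / ‖lam j‖ =
          ∑ j ∈ (hfin (R (m+1))).toFinset \ (hfin (R m)).toFinset, 1 / ‖lam j‖ +
          ∑ j ∈ (hfin (R m)).toFinset, 1 / ‖lam j‖ :=
        (Finset.sum_sdiff (hTsub m)).symm
      -- lower bound on the shell sum
      have hcard : S * R m ≤ (((hfin (R (m+1))).toFinset \ (hfin (R m)).toFinset).card : ℝ) := by
        have h1 : (((hfin (R (m+1))).toFinset \ (hfin (R m)).toFinset).card : ℝ) =
            ((hfin (R (m+1))).toFinset.card : ℝ) - ((hfin (R m)).toFinset.card : ℝ) := by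
          rw [Finset.card_sdiff_of_subset (hTsub m)]
          rw [Nat.cast_sub (Finset.card_le_card (hTsub m))]
        have h2 := hlin' (R (m+1)) (hRge (m+1))
        have h3 := hA (R m) (hRpos m)
        have h4 : c * R (m + 1) = 2 * S * R m := by
          simp only [hRdef, pow_succ, hqdef]
          field_simp
        rw [h1]
        linarith
      have hshell : c / 2 ≤
          ∑ j ∈ (hfin (R (m+1))).toFinset \ (hfin (R m)).toFinset, 1 / ‖lam j‖ := by
        have h1 : ∀ j ∈ (hfin (R (m+1))).toFinset \ (hfin (R m)).toFinset,
            1 / R (m+1) ≤ 1 / ‖lam j‖ := by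
          intro j hj
          have hj' := (Finset.mem_sdiff.mp hj).1
          rw [Set.Finite.mem_toFinset] at hj'
          exact one_div_le_one_div_of_le (hnorm_pos j) hj'
        have h2 : ((((hfin (R (m+1))).toFinset \ (hfin (R m)).toFinset).card : ℝ)) * (1 / R (m+1)) ≤
            ∑ j ∈ (hfin (R (m+1))).toFinset \ (hfin (R m)).toFinset, 1 / ‖lam j‖ := by
          calc (_ : ℝ) = ∑ _j ∈ (hfin (R (m+1))).toFinset \ (hfin (R m)).toFinset, 1 / R (m+1) := by
                rw [Finset.sum_const, nsmul_eq_mul]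
            _ ≤ _ := Finset.sum_le_sum h1
        have h3 : c / 2 ≤ (S * R m) * (1 / R (m+1)) := by
          have hR1pos := hRpos (m+1)
          rw [mul_one_div, le_div_iff₀ hR1pos]
          have h4 : c * R (m + 1) = 2 * S * R m := by
            simp only [hRdef, pow_succ, hqdef]
            field_simp
          nlinarith
        have h5 : (S * R m) * (1 / R (m+1)) ≤
            ((((hfin (R (m+1))).toFinset \ (hfin (R m)).toFinset).card : ℝ)) * (1 / R (m+1)) := by
          have : (0:ℝ) ≤ 1 / R (m+1) := by positivity
          nlinarith
        linarith
      rw [hsplit]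
      push_cast
      linarith
  -- contradiction
  obtain ⟨m, hm⟩ := exists_nat_gt (S / (c / 2))
  have h1 := hmain m
  have h2 : ∑ j ∈ (hfin (R m)).toFinset, 1 / ‖lam j‖ ≤ S :=
    Summable.sum_le_tsum _ (fun j _ => hfnn j) hsumf
  have h3 : S < (m : ℝ) * (c / 2) := by
    rw [div_lt_iff₀ (by linarith : (0:ℝ) < c / 2)] at hm
    linarith
  linarith
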